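/- Let T be a homogeneous tree in which every vertex has degree n+1, with n ≥ 2, and let S be a finite nonempty set of vertices of T. Call a vertex v ∈ S 'surrounded in S' if every one of the n+1 components of T \ {v} intersects S. Then the number of vertices of S surrounded in S is strictly less than |S| / n. -/

import Mathlib

open SimpleGraph Walk

section Aux

variable {V : Type*} [DecidableEq V] {T : SimpleGraph V}

/-- In a tree, the length of any path equals the distance between its endpoints. -/
private lemma tree_dist_eq (hconn : T.Connected) (hacyc : T.IsAcyclic) {a b : V}
    (p : T.Walk a b) (hp : p.IsPath) : T.dist a b = p.length := by
  obtain ⟨q, hq⟩ := hconn.exists_walk_length_eq_dist a b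
  have h1 : T.dist a b ≤ p.length := SimpleGraph.dist_le p
  have h2 : q.bypass.length ≤ q.length := Walk.length_bypass_le q
  have h3 : (⟨q.bypass, q.bypass_isPath⟩ : T.Path a b) = ⟨p, hp⟩ :=
    hacyc.path_unique _ _
  have h4 : q.bypass = p := congrArg Subtype.val h3
  have h5 : q.bypass.length = p.length := congrArg Walk.length h4
  omega

/-- Two distinct neighbors of `v` cannot be joined by a walk avoiding `v` in an
acyclic graph. -/
private lemma no_detour (hacyc : T.IsAcyclic) {v w w' : V} (hw : T.Adj v w) (hw' : T.Adj v w')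
    (hne : w ≠ w') (A : T.Walk w w') (hA : v ∉ A.support) : False := by
  have hp2 : (Walk.cons hw.symm (Walk.cons hw' Walk.nil)).IsPath := by
    simp [Walk.isPath_def, hw.ne', hw'.ne, hne]
  have h3 : (⟨A.bypass, A.bypass_isPath⟩ : T.Path w w') = ⟨_, hp2⟩ :=
    hacyc.path_unique _ _
  have h4 : A.bypass = Walk.cons hw.symm (Walk.cons hw' Walk.nil) := congrArg Subtype.val h3
  have hv : v ∈ A.bypass.support := by rw [h4]; simp
  exact hA (A.support_bypass_subset hv)

/-- Splitting a path at an interior vertex: the initial segment avoids the far endpoint,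
and the interior vertex is strictly closer to the far endpoint. -/
private lemma key_split (hconn : T.Connected) (hacyc : T.IsAcyclic) {s x v : V}
    (p : T.Walk s x) (hp : p.IsPath) (hv : v ∈ p.support) (hvx : v ≠ x) (hvs : v ≠ s) :
    (∃ W : T.Walk s v, x ∉ W.support) ∧ T.dist x v < T.dist x s := by
  have hspec := p.take_spec hv
  have hnd : p.support.Nodup := hp.support_nodup
  have hsup : p.support = (p.takeUntil v hv).support ++ (p.dropUntil v hv).support.tail := by
    rw [← Walk.support_append, hspec]
  have hxtail : x ∈ (p.dropUntil v hv).support.tail := by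
    have hx : x ∈ (p.dropUntil v hv).support := Walk.end_mem_support _
    rw [Walk.support_eq_cons] at hx
    rcases List.mem_cons.mp hx with h | h
    · exact absurd h.symm hvx
    · exact h
  have hxW : x ∉ (p.takeUntil v hv).support := by
    rw [hsup] at hnd
    exact fun hxw => (List.disjoint_of_nodup_append hnd) hxw hxtail
  constructor
  · exact ⟨p.takeUntil v hv, hxW⟩
  · have hlen : (p.takeUntil v hv).length + (p.dropUntil v hv).length = p.length := by
      have := congrArg Walk.length hspec
      rwa [Walk.length_append] at this
    have htake1 : 1 ≤ (p.takeUntil v hv).length := by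
      by_contra h
      have h0 : (p.takeUntil v hv).length = 0 := by omega
      exact hvs (Walk.eq_of_length_eq_zero h0).symm
    have hd1 : T.dist x v ≤ (p.dropUntil v hv).length := by
      rw [SimpleGraph.dist_comm]
      exact SimpleGraph.dist_le _
    have hd2 : T.dist x s = p.length := by
      rw [SimpleGraph.dist_comm]
      exact tree_dist_eq hconn hacyc p hp
    omega

end Aux

/-- In an infinite homogeneous tree `T` of degree `n+1` (with `n ≥ 2`), for a
finite nonempty set `S` of vertices, the number of vertices `v ∈ S` that are *surrounded in
`S`* (i.e. every component of `T \ {v}` — equivalently, the component beyond each of the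
`n+1` neighbors of `v`, reached by a walk avoiding `v` — meets `S`) is strictly less than
`|S| / n`. -/
theorem stmt_2 {V : Type*} (T : SimpleGraph V) [∀ v : V, Fintype (T.neighborSet v)]
    (n : ℕ) (hn : 2 ≤ n) (hconn : T.Connected) (hacyc : T.IsAcyclic)
    (hdeg : ∀ v : V, T.degree v = n + 1)
    (S : Finset V) (hS : S.Nonempty) :
    (({v : V | v ∈ S ∧ ∀ w : V, T.Adj v w →
        ∃ u ∈ S, ∃ p : T.Walk w u, v ∉ p.support}).ncard : ℝ) < (S.card : ℝ) / n := by
  classical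
  obtain ⟨r, hr⟩ := hS
  -- the surrounded vertices, as a Finset
  set KF : Finset V := S.filter (fun v => ∀ w : V, T.Adj v w →
      ∃ u ∈ S, ∃ p : T.Walk w u, v ∉ p.support) with hKF
  -- canonical paths
  have pth : ∀ x y : V, T.Path x y := fun x y => (hconn.preconnected x y).some.toPath
  -- any walk avoiding a vertex of the canonical path is impossible
  have unique_sep : ∀ {x y : V} (A : T.Walk x y) {v : V},
      v ∉ A.support → v ∈ (pth x y).1.support → False := by
    intro x y A v hA hv
    have h3 : (⟨A.bypass, A.bypass_isPath⟩ : T.Path x y) = pth x y := hacyc.path_unique _ _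
    rw [← h3] at hv
    exact hA (A.support_bypass_subset hv)
  -- child neighbors: those whose canonical path to r passes through v
  set child : V → Finset V :=
    fun v => (T.neighborFinset v).filter (fun w => v ∈ (pth w r).1.support) with hchild
  have hchild_adj : ∀ v w, w ∈ child v → T.Adj v w := by
    intro v w hw
    exact (T.mem_neighborFinset v w).mp (Finset.mem_filter.mp hw).1
  have hchild_card : ∀ v : V, n ≤ (child v).card := by
    intro v
    have htot := Finset.card_filter_add_card_filter_not
      (s := T.neighborFinset v) (p := fun w => v ∈ (pth w r).1.support)
    have hdv : (T.neighborFinset v).card = n + 1 := by rw [← hdeg v]; rfl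
    have hone : ((T.neighborFinset v).filter
        (fun w => ¬ v ∈ (pth w r).1.support)).card ≤ 1 := by
      rw [Finset.card_le_one]
      intro a ha b hb
      simp only [Finset.mem_filter, SimpleGraph.mem_neighborFinset] at ha hb
      by_contra hab
      refine no_detour hacyc ha.1 hb.1 hab ((pth a r).1.append (pth b r).1.reverse) ?_
      rw [Walk.mem_support_append_iff]
      push_neg
      refine ⟨ha.2, ?_⟩
      rw [Walk.support_reverse, List.mem_reverse]
      exact hb.2
    have hceq : (child v).card = ((T.neighborFinset v).filter
        (fun w => v ∈ (pth w r).1.support)).card := rfl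
    omega
  -- membership facts in KF
  have hKFS : ∀ v ∈ KF, v ∈ S := fun v hv => (Finset.mem_filter.mp hv).1
  -- minimal element choice for each pair
  have hfex : ∀ q : V × V, ∃ s : V, q.1 ∈ KF → q.2 ∈ child q.1 →
      (s ∈ S ∧ (∃ p : T.Walk q.2 s, q.1 ∉ p.support)) ∧
      ∀ u ∈ S, (∃ p : T.Walk q.2 u, q.1 ∉ p.support) → T.dist q.1 s ≤ T.dist q.1 u := by
    rintro ⟨v, w⟩
    by_cases h : v ∈ KF ∧ w ∈ child v
    · obtain ⟨hv, hw⟩ := h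
      have hadj : T.Adj v w := hchild_adj v w hw
      have hsur := (Finset.mem_filter.mp hv).2
      set S' : Finset V := S.filter (fun u => ∃ p : T.Walk w u, v ∉ p.support) with hS'
      have hne : S'.Nonempty := by
        obtain ⟨u, hu, hp⟩ := hsur w hadj
        exact ⟨u, Finset.mem_filter.mpr ⟨hu, hp⟩⟩
      obtain ⟨s, hs, hsmin⟩ := S'.exists_min_image (T.dist v) hne
      have hs' := Finset.mem_filter.mp hs
      exact ⟨s, fun _ _ => ⟨⟨hs'.1, hs'.2⟩,
        fun u hu hup => hsmin u (Finset.mem_filter.mpr ⟨hu, hup⟩)⟩⟩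
    · exact ⟨r, fun h1 h2 => absurd ⟨h1, h2⟩ h⟩
  choose f hf using hfex
  -- separation: v lies on the canonical path from its branch points to r
  have hB : ∀ v w s : V, v ∈ (pth w r).1.support →
      (∃ A : T.Walk w s, v ∉ A.support) → v ∈ (pth s r).1.support := by
    rintro v w s hchildv ⟨A, hA⟩
    by_contra hvq
    refine unique_sep (A.append (pth s r).1) ?_ hchildv
    rw [Walk.mem_support_append_iff]
    push_neg
    exact ⟨hA, hvq⟩
  -- basic facts about f at valid pairs
  have hfS : ∀ v w, v ∈ KF → w ∈ child v → f (v, w) ∈ S :=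
    fun v w hv hw => ((hf (v, w) hv hw).1).1
  have hfbr : ∀ v w, v ∈ KF → w ∈ child v → ∃ p : T.Walk w (f (v, w)), v ∉ p.support :=
    fun v w hv hw => ((hf (v, w) hv hw).1).2
  have hfmin : ∀ v w, v ∈ KF → w ∈ child v → ∀ u ∈ S,
      (∃ p : T.Walk w u, v ∉ p.support) → T.dist v (f (v, w)) ≤ T.dist v u :=
    fun v w hv hw => (hf (v, w) hv hw).2
  have hfne : ∀ v w, v ∈ KF → w ∈ child v → f (v, w) ≠ v := by
    intro v w hv hw he
    obtain ⟨A, hA⟩ := hfbr v w hv hw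
    have hA' : v ∈ (A.copy rfl he).support := Walk.end_mem_support _
    rw [Walk.support_copy] at hA'
    exact hA hA'
  have hfpath : ∀ v w, v ∈ KF → w ∈ child v → v ∈ (pth (f (v, w)) r).1.support := by
    intro v w hv hw
    exact hB v w _ (Finset.mem_filter.mp hw).2 (hfbr v w hv hw)
  have hfr : ∀ v w, v ∈ KF → w ∈ child v → f (v, w) ≠ r := by
    intro v w hv hw he
    have hvp := hfpath v w hv hw
    rw [he] at hvp
    -- the canonical path from r to r is trivial
    have hlen0 : (pth r r).1.length = 0 := by
      have := tree_dist_eq hconn hacyc (pth r r).1 (pth r r).2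
      rw [SimpleGraph.dist_self] at this
      omega
    have hsupp : (pth r r).1.support = [r] := by
      have hlsupp : (pth r r).1.support.length = 1 := by
        rw [Walk.length_support, hlen0]
      obtain ⟨a, ha⟩ := List.length_eq_one_iff.mp hlsupp
      have : r ∈ (pth r r).1.support := Walk.start_mem_support _
      rw [ha] at this ⊢
      simp at this
      rw [this]
    rw [hsupp] at hvp
    simp at hvp
    exact hfne v w hv hw (he.trans hvp.symm)
  -- the set of pairs
  set P : Finset (V × V) := KF.biUnion (fun v => (child v).image (fun w => (v, w))) with hP
  have hPmem : ∀ q : V × V, q ∈ P ↔ q.1 ∈ KF ∧ q.2 ∈ child q.1 := by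
    rintro ⟨v, w⟩
    simp only [hP, Finset.mem_biUnion, Finset.mem_image]
    constructor
    · rintro ⟨a, ha, b, hb, he⟩
      obtain ⟨rfl, rfl⟩ : a = v ∧ b = w := Prod.mk.injEq .. ▸ he
      exact ⟨ha, hb⟩
    · intro ⟨h1, h2⟩
      exact ⟨v, h1, w, h2, rfl⟩
  -- lower bound on the number of pairs
  have hPcard : KF.card * n ≤ P.card := by
    rw [hP, Finset.card_biUnion]
    · calc KF.card * n = ∑ _v ∈ KF, n := by rw [Finset.sum_const, smul_eq_mul, mul_comm]
        _ ≤ ∑ v ∈ KF, ((child v).image (fun w => (v, w))).card := by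
            refine Finset.sum_le_sum fun v _ => ?_
            rw [Finset.card_image_of_injective _
              (fun a b h => by simpa using congrArg Prod.snd h)]
            exact hchild_card v
    · intro a _ b _ hab
      rw [Function.onFun, Finset.disjoint_left]
      rintro ⟨x, y⟩ hxa hxb
      simp only [Finset.mem_image] at hxa hxb
      obtain ⟨_, _, he1⟩ := hxa
      obtain ⟨_, _, he2⟩ := hxb
      apply hab
      have h1 := congrArg Prod.fst he1
      have h2 := congrArg Prod.fst he2
      simp at h1 h2
      rw [h1, h2]
  -- the injection into S.erase r
  have hmaps : ∀ q ∈ P, f q ∈ S.erase r := by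
    intro q hq
    obtain ⟨h1, h2⟩ := (hPmem q).mp hq
    exact Finset.mem_erase.mpr ⟨hfr q.1 q.2 h1 h2, hfS q.1 q.2 h1 h2⟩
  have hinj : Set.InjOn f ↑P := by
    rintro ⟨v, w⟩ hp ⟨v', w'⟩ hp' hfe
    rw [Finset.mem_coe, hPmem] at hp hp'
    obtain ⟨hv, hw⟩ := hp
    obtain ⟨hv', hw'⟩ := hp'
    by_cases hvv : v = v'
    · subst hvv
      by_cases hww : w = w'
      · rw [hww]
      · exfalso
        obtain ⟨A0, hA0⟩ := hfbr v w hv hw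
        obtain ⟨A', hA'⟩ := hfbr v w' hv hw'
        set A : T.Walk w (f (v, w')) := A0.copy rfl hfe with hAdef
        have hA : v ∉ A.support := by rw [hAdef, Walk.support_copy]; exact hA0
        refine no_detour hacyc (hchild_adj v w hw) (hchild_adj v w' hw') hww
          (A.append A'.reverse) ?_
        rw [Walk.mem_support_append_iff]
        push_neg
        refine ⟨hA, ?_⟩
        rw [Walk.support_reverse, List.mem_reverse]
        exact hA'
    · exfalso
      set s : V := f (v, w) with hs
      have hfe' : f (v', w') = s := hfe.symm
      obtain ⟨A, hA⟩ := hfbr v w hv hw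
      obtain ⟨A0', hA0'⟩ := hfbr v' w' hv' hw'
      set A' : T.Walk w' s := A0'.copy rfl hfe' with hA'def
      have hA' : v' ∉ A'.support := by rw [hA'def, Walk.support_copy]; exact hA0'
      -- both v and v' lie on the canonical path from s to r
      have hvq : v ∈ (pth s r).1.support := hfpath v w hv hw
      have hv'q : v' ∈ (pth s r).1.support := by
        have := hfpath v' w' hv' hw'
        rwa [hfe'] at this
      have hsv : s ≠ v := hfne v w hv hw
      have hsv' : s ≠ v' := by
        have := hfne v' w' hv' hw'
        rwa [hfe'] at this
      set q : T.Walk s r := (pth s r).1 with hq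
      have hqpath : q.IsPath := (pth s r).2
      have hsplit : v ∈ (q.takeUntil v' hv'q).support ∨ v ∈ (q.dropUntil v' hv'q).support := by
        rw [← Walk.mem_support_append_iff, q.take_spec hv'q]
        exact hvq
      rcases hsplit with hcase | hcase
      · -- v comes before v' : contradict minimality at (v', w')
        have htpath : (q.takeUntil v' hv'q).IsPath := hqpath.takeUntil _
        obtain ⟨⟨W, hW⟩, hdist⟩ :=
          key_split hconn hacyc (q.takeUntil v' hv'q) htpath hcase hvv (Ne.symm hsv)
        have hle : T.dist v' s ≤ T.dist v' v := by
          have hmm := hfmin v' w' hv' hw' v (hKFS v hv) ⟨A'.append W, by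
            rw [Walk.mem_support_append_iff]; push_neg; exact ⟨hA', hW⟩⟩
          rwa [hfe'] at hmm
        exact Nat.lt_irrefl _ (lt_of_le_of_lt hle hdist)
      · -- v' comes before v : contradict minimality at (v, w)
        have hvu : v ∈ (q.dropUntil v' hv'q).support := hcase
        set u' : T.Walk v' r := q.dropUntil v' hv'q with hu'
        set p2 : T.Walk s v := (q.takeUntil v' hv'q).append (u'.takeUntil v hvu) with hp2
        have hsplit2 : p2.append (u'.dropUntil v hvu) = q := by
          rw [hp2, ← Walk.append_assoc, u'.take_spec hvu, q.take_spec hv'q]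
        have hp2path : p2.IsPath := by
          have : (p2.append (u'.dropUntil v hvu)).IsPath := by rw [hsplit2]; exact hqpath
          exact this.of_append_left
        have hv'p2 : v' ∈ p2.support := by
          rw [hp2, Walk.mem_support_append_iff]
          exact Or.inl (Walk.end_mem_support _)
        obtain ⟨⟨W, hW⟩, hdist⟩ :=
          key_split hconn hacyc p2 hp2path hv'p2 (Ne.symm hvv) (Ne.symm hsv')
        have hle : T.dist v s ≤ T.dist v v' := by
          refine hfmin v w hv hw v' (hKFS v' hv') ⟨A.append W, ?_⟩
          rw [Walk.mem_support_append_iff]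
          push_neg
          exact ⟨hA, hW⟩
        exact Nat.lt_irrefl _ (lt_of_le_of_lt hle hdist)
  have hcard2 : P.card ≤ (S.erase r).card :=
    Finset.card_le_card_of_injOn f hmaps hinj
  have herase : (S.erase r).card = S.card - 1 := Finset.card_erase_of_mem hr
  have hScard : 1 ≤ S.card := Finset.card_pos.mpr ⟨r, hr⟩
  have hmain : KF.card * n < S.card := by omega
  -- identify the set with KF
  have hsetKF : {v : V | v ∈ S ∧ ∀ w : V, T.Adj v w →
      ∃ u ∈ S, ∃ p : T.Walk w u, v ∉ p.support} = ↑KF := by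
    ext v
    simp [hKF]
  rw [hsetKF, Set.ncard_coe_finset]
  rw [lt_div_iff₀ (by positivity)]
  exact_mod_cast hmain
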